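/- Let G be a group acting on a finite set U, let W and V be finite sets, and let P ⊆ ℝ^U × ℝ^W be a G-symmetric polyhedron defined by a family of |V| linear inequality constraints. If P recognizes a set A ⊆ {0,1}^U, then there exist a finite set W' with |W'| ≤ |W| and a rigid G-symmetric polyhedron Q ⊆ ℝ^U × ℝ^{W'}, definable by at most |V| linear inequality constraints, that recognizes A. -/

import Mathlib

/-- The action of a pair `(π, σ)` on a point of `ℝ^U × ℝ^W`. -/
def pairAct {G U W : Type} [Group G] [MulAction G U]
    (π : G) (σ : Equiv.Perm W) (p : (U → ℝ) × (W → ℝ)) : (U → ℝ) × (W → ℝ) :=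
  (fun u => p.1 (π⁻¹ • u), fun w => p.2 (σ⁻¹ w))

/-- `P ⊆ ℝ^U × ℝ^W` is `G`-symmetric: every `π ∈ G` extends to some `σ ∈ Sym_W`
with `(π,σ) · P = P`. -/
def GSymmetric (G : Type) {U W : Type} [Group G] [MulAction G U]
    (P : Set ((U → ℝ) × (W → ℝ))) : Prop :=
  ∀ π : G, ∃ σ : Equiv.Perm W, pairAct π σ '' P = P

/-- `P ⊆ ℝ^U × ℝ^W` is rigid `G`-symmetric: for every `π ∈ G` there is a unique
`σ ∈ Sym_W` with `(π,σ) · P = P`. -/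
def RigidGSymmetric (G : Type) {U W : Type} [Group G] [MulAction G U]
    (P : Set ((U → ℝ) × (W → ℝ))) : Prop :=
  ∀ π : G, ∃! σ : Equiv.Perm W, pairAct π σ '' P = P

/-- `P` recognizes `A ⊆ {0,1}^U`: every `a ∈ A` is the projection to `ℝ^U` of a point
of `P`, and no point of `{0,1}^U \ A` is such a projection. -/
def Recognizes {U W : Type} (P : Set ((U → ℝ) × (W → ℝ))) (A : Set (U → ℝ)) : Prop :=
  (∀ a ∈ A, ∃ y, (a, y) ∈ P) ∧
  (∀ x : U → ℝ, (∀ u, x u = 0 ∨ x u = 1) → x ∉ A → ∀ y, (x, y) ∉ P)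

/-- The polyhedron in `ℝ^U × ℝ^W` determined by coefficient vectors `a v` and offsets
`b v`, for `v` in a finite index set `V`. -/
def polyhedronOf {U W V : Type} [Fintype U] [Fintype W]
    (a : V → (U → ℝ) × (W → ℝ)) (b : V → ℝ) : Set ((U → ℝ) × (W → ℝ)) :=
  {p | ∀ v : V, (∑ u, (a v).1 u * p.1 u) + (∑ w, (a v).2 w * p.2 w) ≤ b v}

section Helpers
variable {G U W : Type} [Group G] [MulAction G U]

lemma pairAct_pairAct (π π' : G) (σ σ' : Equiv.Perm W) (p : (U → ℝ) × (W → ℝ)) :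
    pairAct π σ (pairAct π' σ' p) = pairAct (π * π') (σ * σ') p := by
  unfold pairAct
  refine Prod.ext (funext fun u => ?_) (funext fun w => ?_)
  · simp [mul_smul]
  · simp

lemma pairAct_one : pairAct (G := G) (U := U) (W := W) 1 1 = id := by
  funext p
  unfold pairAct
  refine Prod.ext (funext fun u => ?_) (funext fun w => ?_) <;> simp

lemma pairAct_image_image (π π' : G) (σ σ' : Equiv.Perm W)
    (P : Set ((U → ℝ) × (W → ℝ))) :
    pairAct π σ '' (pairAct π' σ' '' P) = pairAct (π * π') (σ * σ') '' P := by
  rw [← Set.image_comp]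
  exact Set.image_congr' (fun p => pairAct_pairAct π π' σ σ' p)

lemma pairAct_bijective (π : G) (σ : Equiv.Perm W) :
    Function.Bijective (pairAct (U := U) π σ) := by
  refine Function.bijective_iff_has_inverse.2 ⟨pairAct π⁻¹ σ⁻¹, fun p => ?_, fun p => ?_⟩
  · rw [pairAct_pairAct]; simp [pairAct_one]
  · rw [pairAct_pairAct]; simp [pairAct_one]

lemma mem_iff_of_image_eq {π : G} {σ : Equiv.Perm W} {P : Set ((U → ℝ) × (W → ℝ))}
    (h : pairAct π σ '' P = P) (p : (U → ℝ) × (W → ℝ)) :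
    pairAct π σ p ∈ P ↔ p ∈ P := by
  constructor
  · intro hp
    rw [← h] at hp
    obtain ⟨q, hq, hqp⟩ := hp
    rwa [← (pairAct_bijective π σ).1 hqp]
  · intro hp
    rw [← h]
    exact ⟨p, hp, rfl⟩

lemma image_eq_of_mem_iff {π : G} {σ : Equiv.Perm W} {P : Set ((U → ℝ) × (W → ℝ))}
    (h : ∀ p, pairAct π σ p ∈ P ↔ p ∈ P) : pairAct π σ '' P = P := by
  ext q
  constructor
  · rintro ⟨p, hp, rfl⟩
    exact (h p).2 hp
  · intro hq
    obtain ⟨p, rfl⟩ := (pairAct_bijective π σ).2 q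
    exact ⟨p, (h p).1 hq, rfl⟩

lemma pairAct_inv_image_eq {π : G} {σ : Equiv.Perm W} {P : Set ((U → ℝ) × (W → ℝ))}
    (h : pairAct π σ '' P = P) : pairAct π⁻¹ σ⁻¹ '' P = P := by
  conv_lhs => rw [← h]
  rw [pairAct_image_image]
  simp [pairAct_one]

/-- The stabilizer subgroup of `P` in `Sym W` (with trivial `G`-part). -/
def stabS (G : Type) {U W : Type} [Group G] [MulAction G U]
    (P : Set ((U → ℝ) × (W → ℝ))) : Subgroup (Equiv.Perm W) where
  carrier := {σ | pairAct (1 : G) σ '' P = P}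
  one_mem' := by simp [pairAct_one]
  mul_mem' := by
    intro σ τ hσ hτ
    show pairAct (1 : G) (σ * τ) '' P = P
    rw [show (1 : G) = 1 * 1 by simp, ← pairAct_image_image, hτ, hσ]
  inv_mem' := by
    intro σ hσ
    show pairAct (1 : G) σ⁻¹ '' P = P
    rw [show (1 : G) = (1 : G)⁻¹ by simp]
    exact pairAct_inv_image_eq hσ

end Helpers

section Main
set_option linter.unusedSectionVars false
variable {G U W V : Type} [Group G] [MulAction G U] [Fintype U] [Fintype W] [Fintype V]

/-- Lift a function on orbit classes to `W`. -/
def liftY (S : Subgroup (Equiv.Perm W))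
    (y' : Quotient (MulAction.orbitRel S W) → ℝ) : W → ℝ :=
  fun w => y' (Quotient.mk (MulAction.orbitRel S W) w)

open Classical in
/-- The quotient coefficient vectors. -/
noncomputable def aQ (S : Subgroup (Equiv.Perm W)) (a : V → (U → ℝ) × (W → ℝ)) :
    V → (U → ℝ) × (Quotient (MulAction.orbitRel S W) → ℝ) :=
  fun v => ((a v).1,
    fun o => ∑ w ∈ Finset.univ.filter
      (fun w => Quotient.mk (MulAction.orbitRel S W) w = o), (a v).2 w)

open Classical in
lemma sum_aQ (S : Subgroup (Equiv.Perm W)) (a : V → (U → ℝ) × (W → ℝ)) (v : V)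
    (y' : Quotient (MulAction.orbitRel S W) → ℝ) :
    ∑ o, (aQ S a v).2 o * y' o = ∑ w, (a v).2 w * liftY S y' w := by
  rw [← Finset.sum_fiberwise Finset.univ
    (fun w => Quotient.mk (MulAction.orbitRel S W) w)
    (fun w => (a v).2 w * liftY S y' w)]
  refine Finset.sum_congr rfl fun o _ => ?_
  rw [aQ]
  dsimp only
  rw [Finset.sum_mul]
  refine Finset.sum_congr rfl fun w hw => ?_
  have : Quotient.mk (MulAction.orbitRel S W) w = o := (Finset.mem_filter.1 hw).2
  rw [liftY, this]

open Classical in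
lemma mem_polyQ_iff (S : Subgroup (Equiv.Perm W)) (a : V → (U → ℝ) × (W → ℝ)) (b : V → ℝ)
    (x : U → ℝ) (y' : Quotient (MulAction.orbitRel S W) → ℝ) :
    (x, y') ∈ polyhedronOf (aQ S a) b ↔ (x, liftY S y') ∈ polyhedronOf a b := by
  unfold polyhedronOf
  simp only [Set.mem_setOf_eq]
  constructor
  · intro h v
    have := h v
    rwa [sum_aQ] at this
  · intro h v
    rw [sum_aQ]
    exact h v

lemma conj_mem_stabS {P : Set ((U → ℝ) × (W → ℝ))} {π : G} {σ : Equiv.Perm W}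
    (h : pairAct π σ '' P = P) {τ : Equiv.Perm W} (hτ : τ ∈ stabS G P) :
    σ * τ * σ⁻¹ ∈ stabS G P := by
  show pairAct (1 : G) (σ * τ * σ⁻¹) '' P = P
  have : (1 : G) = π * (1 * π⁻¹) := by group
  rw [this, show σ * τ * σ⁻¹ = σ * (τ * σ⁻¹) by group, ← pairAct_image_image,
    ← pairAct_image_image, pairAct_inv_image_eq h, hτ, h]

lemma rel_map {P : Set ((U → ℝ) × (W → ℝ))} {π : G} {σ : Equiv.Perm W}
    (h : pairAct π σ '' P = P) (w₁ w₂ : W)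
    (hr : (MulAction.orbitRel (stabS G P) W).r w₁ w₂) :
    (MulAction.orbitRel (stabS G P) W).r (σ w₁) (σ w₂) := by
  obtain ⟨⟨τ, hτ⟩, hw⟩ := hr
  refine ⟨⟨σ * τ * σ⁻¹, conj_mem_stabS h hτ⟩, ?_⟩
  show (σ * τ * σ⁻¹) (σ w₂) = σ w₁
  simp only [Equiv.Perm.mul_apply, Equiv.Perm.inv_def, Equiv.symm_apply_apply]
  have : τ w₂ = w₁ := hw
  rw [this]

lemma rel_iff {P : Set ((U → ℝ) × (W → ℝ))} {π : G} {σ : Equiv.Perm W}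
    (h : pairAct π σ '' P = P) (w₁ w₂ : W) :
    (MulAction.orbitRel (stabS G P) W).r w₁ w₂ ↔
      (MulAction.orbitRel (stabS G P) W).r (σ w₁) (σ w₂) := by
  constructor
  · exact rel_map h w₁ w₂
  · intro hr
    have := rel_map (pairAct_inv_image_eq h) (σ w₁) (σ w₂) hr
    simpa using this

/-- The induced permutation on orbit classes. -/
def permQ {P : Set ((U → ℝ) × (W → ℝ))} {π : G} {σ : Equiv.Perm W}
    (h : pairAct π σ '' P = P) :
    Equiv.Perm (Quotient (MulAction.orbitRel (stabS G P) W)) :=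
  Quotient.congr σ (rel_iff h)

lemma permQ_mk {P : Set ((U → ℝ) × (W → ℝ))} {π : G} {σ : Equiv.Perm W}
    (h : pairAct π σ '' P = P) (w : W) :
    permQ h (Quotient.mk _ w) = Quotient.mk _ (σ w) := rfl

lemma permQ_symm_mk {P : Set ((U → ℝ) × (W → ℝ))} {π : G} {σ : Equiv.Perm W}
    (h : pairAct π σ '' P = P) (w : W) :
    (permQ h)⁻¹ (Quotient.mk _ w) = Quotient.mk _ (σ⁻¹ w) := by
  have : (permQ h) (Quotient.mk _ (σ⁻¹ w)) = Quotient.mk _ w := by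
    rw [permQ_mk]; simp
  rw [← this]; simp

end Main

section Main2
set_option linter.unusedSectionVars false
variable {G U W V : Type} [Group G] [MulAction G U] [Fintype U] [Fintype W] [Fintype V]

open Classical in
/-- `Q` inherits `G`-symmetry. -/
lemma polyQ_image_eq (a : V → (U → ℝ) × (W → ℝ)) (b : V → ℝ)
    {π : G} {σ : Equiv.Perm W} (h : pairAct π σ '' polyhedronOf a b = polyhedronOf a b) :
    pairAct π (permQ h) '' polyhedronOf (aQ (stabS G (polyhedronOf a b)) a) b
      = polyhedronOf (aQ (stabS G (polyhedronOf a b)) a) b := by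
  set S := stabS G (polyhedronOf a b)
  apply image_eq_of_mem_iff
  rintro ⟨x, y'⟩
  have hlift : liftY S (fun o => y' ((permQ h)⁻¹ o)) = fun w => liftY S y' (σ⁻¹ w) := by
    funext w
    show y' ((permQ h)⁻¹ (Quotient.mk _ w)) = y' (Quotient.mk _ (σ⁻¹ w))
    rw [permQ_symm_mk]
  have h1 : pairAct π (permQ h) (x, y')
      = (fun u => x (π⁻¹ • u), fun o => y' ((permQ h)⁻¹ o)) := rfl
  rw [h1, mem_polyQ_iff, mem_polyQ_iff, hlift]
  have h2 : ((fun u => x (π⁻¹ • u), fun w => liftY S y' (σ⁻¹ w)) :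
      (U → ℝ) × (W → ℝ)) = pairAct π σ (x, liftY S y') := rfl
  rw [h2]
  exact mem_iff_of_image_eq h _

end Main2

section Main3
set_option linter.unusedSectionVars false
variable {G U W V : Type} [Group G] [MulAction G U] [Fintype U] [Fintype W] [Fintype V]

open Classical in
/-- Averaging a feasible point over the stabilizer gives an orbit-constant feasible point. -/
lemma average_mem (a : V → (U → ℝ) × (W → ℝ)) (b : V → ℝ)
    {x : U → ℝ} {y : W → ℝ} (hxy : (x, y) ∈ polyhedronOf a b) :
    ∃ y' : Quotient (MulAction.orbitRel (stabS G (polyhedronOf a b)) W) → ℝ,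
      (x, liftY _ y') ∈ polyhedronOf a b := by
  set P := polyhedronOf a b with hPdef
  set S := stabS G P with hSdef
  set N : ℝ := (Fintype.card S : ℝ) with hNdef
  have hN : 0 < N := by
    have h0 : 0 < Fintype.card S := Fintype.card_pos
    rw [hNdef]
    exact_mod_cast h0
  set ybar : W → ℝ := fun w => (∑ σ : S, y ((σ : Equiv.Perm W)⁻¹ w)) / N with hybar
  -- each shifted point is in P
  have hshift : ∀ σ : S, (x, fun w => y ((σ : Equiv.Perm W)⁻¹ w)) ∈ P := by
    intro σ
    have hσ : pairAct (1 : G) (σ : Equiv.Perm W) '' P = P := σ.2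
    have : pairAct (1 : G) (σ : Equiv.Perm W) (x, y) ∈ P :=
      (mem_iff_of_image_eq hσ _).2 hxy
    have heq : pairAct (1 : G) (σ : Equiv.Perm W) (x, y)
        = (x, fun w => y ((σ : Equiv.Perm W)⁻¹ w)) := by
      unfold pairAct
      refine Prod.ext (funext fun u => ?_) rfl
      simp
    rwa [heq] at this
  -- ybar is constant on orbits
  have hconst : ∀ w₁ w₂ : W, (MulAction.orbitRel S W).r w₁ w₂ → ybar w₁ = ybar w₂ := by
    intro w₁ w₂ hr
    obtain ⟨τ, hτ⟩ := hr
    have hτw : (τ : Equiv.Perm W) w₂ = w₁ := hτ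
    rw [← hτw]
    show (∑ σ : S, y ((σ : Equiv.Perm W)⁻¹ ((τ : Equiv.Perm W) w₂))) / N
        = (∑ σ : S, y ((σ : Equiv.Perm W)⁻¹ w₂)) / N
    congr 1
    refine (Fintype.sum_equiv (Equiv.mulLeft τ)
      (fun ρ : S => y ((ρ : Equiv.Perm W)⁻¹ w₂))
      (fun σ : S => y ((σ : Equiv.Perm W)⁻¹ ((τ : Equiv.Perm W) w₂))) fun ρ => ?_).symm
    simp [Equiv.Perm.mul_apply, mul_inv_rev]
  refine ⟨Quotient.lift ybar (fun w₁ w₂ h => hconst w₁ w₂ h), ?_⟩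
  have hlift : liftY S (Quotient.lift ybar (fun w₁ w₂ h => hconst w₁ w₂ h)) = ybar := rfl
  rw [hlift]
  -- check feasibility
  intro v
  have hb : ∀ σ : S, (∑ u, (a v).1 u * x u)
      + ∑ w, (a v).2 w * y ((σ : Equiv.Perm W)⁻¹ w) ≤ b v := fun σ => hshift σ v
  have h1 : ∀ w, (a v).2 w * ybar w
      = ∑ σ : S, (a v).2 w * y ((σ : Equiv.Perm W)⁻¹ w) / N := by
    intro w
    show (a v).2 w * ((∑ σ : S, y ((σ : Equiv.Perm W)⁻¹ w)) / N) = _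
    rw [← Finset.sum_div, ← Finset.mul_sum, mul_div_assoc]
  have hsum : ∑ w, (a v).2 w * ybar w
      = (∑ σ : S, ∑ w, (a v).2 w * y ((σ : Equiv.Perm W)⁻¹ w)) / N := by
    calc ∑ w, (a v).2 w * ybar w
        = ∑ w, ∑ σ : S, (a v).2 w * y ((σ : Equiv.Perm W)⁻¹ w) / N :=
          Finset.sum_congr rfl fun w _ => h1 w
      _ = ∑ σ : S, ∑ w, (a v).2 w * y ((σ : Equiv.Perm W)⁻¹ w) / N := Finset.sum_comm
      _ = (∑ σ : S, ∑ w, (a v).2 w * y ((σ : Equiv.Perm W)⁻¹ w)) / N := by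
          rw [Finset.sum_div]
          exact Finset.sum_congr rfl fun σ _ => (Finset.sum_div _ _ _).symm
  rw [hsum]
  set c := ∑ u, (a v).1 u * x u with hc
  have hbound : (∑ σ : S, ∑ w, (a v).2 w * y ((σ : Equiv.Perm W)⁻¹ w))
      ≤ N * (b v - c) := by
    calc (∑ σ : S, ∑ w, (a v).2 w * y ((σ : Equiv.Perm W)⁻¹ w))
        ≤ ∑ _σ : S, (b v - c) := by
          refine Finset.sum_le_sum fun σ _ => ?_
          have := hb σ
          linarith
      _ = N * (b v - c) := by
          rw [Finset.sum_const, Finset.card_univ, nsmul_eq_mul, hNdef]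
  have hfin : (∑ σ : S, ∑ w, (a v).2 w * y ((σ : Equiv.Perm W)⁻¹ w)) / N ≤ b v - c := by
    rw [div_le_iff₀ hN]
    nlinarith [hbound]
  linarith

end Main3

open Classical in
lemma key (G U : Type) [Group G] [Fintype U] [MulAction G U] :
    ∀ n : ℕ, ∀ (W : Type) (_ : Fintype W), Fintype.card W ≤ n →
      ∀ (V : Type) (_ : Fintype V) (a : V → (U → ℝ) × (W → ℝ)) (b : V → ℝ),
      GSymmetric G (polyhedronOf a b) →
      ∀ A : Set (U → ℝ), Recognizes (polyhedronOf a b) A →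
      ∃ (W' : Type) (_ : Fintype W'), Fintype.card W' ≤ Fintype.card W ∧
        ∃ (V' : Type) (_ : Fintype V'), Fintype.card V' ≤ Fintype.card V ∧
          ∃ (a' : V' → (U → ℝ) × (W' → ℝ)) (b' : V' → ℝ),
            RigidGSymmetric G (polyhedronOf a' b') ∧
            Recognizes (polyhedronOf a' b') A := by
  intro n
  induction n using Nat.strong_induction_on with
  | _ n ih =>
    intro W instW hWn V instV a b hsym A hrec
    by_cases hS : stabS G (polyhedronOf a b) = ⊥
    · -- P itself is rigid
      refine ⟨W, instW, le_refl _, V, instV, le_refl _, a, b, ?_, hrec⟩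
      intro π
      obtain ⟨σ, h⟩ := hsym π
      refine ⟨σ, h, fun σ' h' => ?_⟩
      have hmem : σ⁻¹ * σ' ∈ stabS G (polyhedronOf a b) := by
        show pairAct (1 : G) (σ⁻¹ * σ') '' polyhedronOf a b = polyhedronOf a b
        have h1 : (1 : G) = π⁻¹ * π := by group
        rw [h1, ← pairAct_image_image, h', pairAct_inv_image_eq h]
      rw [hS, Subgroup.mem_bot] at hmem
      exact (inv_mul_eq_one.mp hmem).symm
    · -- quotient by the stabilizer
      set P := polyhedronOf a b with hPdef
      set S := stabS G P with hSdef
      set W' := Quotient (MulAction.orbitRel S W) with hW'def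
      -- the stabilizer is nontrivial, so the quotient is strictly smaller
      obtain ⟨⟨τ, hτS⟩, hτ1⟩ := Subgroup.ne_bot_iff_exists_ne_one.mp hS
      have hτ : τ ≠ 1 := by
        intro h; exact hτ1 (Subtype.ext h)
      obtain ⟨w₀, hw₀⟩ : ∃ w, τ w ≠ w := by
        by_contra hc
        push_neg at hc
        exact hτ (Equiv.ext fun w => hc w)
      have hcard : Fintype.card W' < Fintype.card W := by
        refine Fintype.card_lt_of_surjective_not_injective
          (Quotient.mk (MulAction.orbitRel S W))
          (fun q => Quotient.inductionOn q fun w => ⟨w, rfl⟩) ?_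
        intro hinj
        apply hw₀
        apply hinj
        exact Quotient.sound ⟨⟨τ, hτS⟩, rfl⟩
      -- the quotient polyhedron
      have hsymQ : GSymmetric G (polyhedronOf (aQ S a) b) := by
        intro π
        obtain ⟨σ, h⟩ := hsym π
        exact ⟨permQ h, polyQ_image_eq a b h⟩
      have hrecQ : Recognizes (polyhedronOf (aQ S a) b) A := by
        constructor
        · intro x hx
          obtain ⟨y, hy⟩ := hrec.1 x hx
          obtain ⟨y', hy'⟩ := average_mem (G := G) a b hy
          exact ⟨y', (mem_polyQ_iff S a b x y').2 hy'⟩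
        · intro x hx hxA y' hy'
          exact hrec.2 x hx hxA _ ((mem_polyQ_iff S a b x y').1 hy')
      obtain ⟨W'', iW'', hc1, V'', iV'', hc2, a'', b'', hrig, hrec''⟩ :=
        ih (Fintype.card W') (lt_of_lt_of_le hcard hWn) W' inferInstance (le_refl _)
          V instV (aQ S a) b hsymQ A hrecQ
      exact ⟨W'', iW'', le_trans hc1 (le_of_lt hcard), V'', iV'', hc2, a'', b'', hrig, hrec''⟩

/-- if a `G`-symmetric polyhedron `P ⊆ ℝ^U × ℝ^W` defined by `|V|` linear
inequality constraints recognizes `A ⊆ {0,1}^U`, then there are a finite set `W'` with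
`|W'| ≤ |W|` and a rigid `G`-symmetric polyhedron `Q ⊆ ℝ^U × ℝ^{W'}`, definable by at
most `|V|` linear inequality constraints, recognizing `A`. -/
theorem statement10 (G U W V : Type) [Group G] [Fintype U] [MulAction G U]
    [Fintype W] [Fintype V]
    (a : V → (U → ℝ) × (W → ℝ)) (b : V → ℝ)
    (P : Set ((U → ℝ) × (W → ℝ))) (hP : P = polyhedronOf a b)
    (hsym : GSymmetric G P)
    (A : Set (U → ℝ)) (hA : ∀ x ∈ A, ∀ u, x u = 0 ∨ x u = 1)
    (hrec : Recognizes P A) :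
    ∃ (W' : Type) (_ : Fintype W'), Fintype.card W' ≤ Fintype.card W ∧
      ∃ (V' : Type) (_ : Fintype V'), Fintype.card V' ≤ Fintype.card V ∧
        ∃ (a' : V' → (U → ℝ) × (W' → ℝ)) (b' : V' → ℝ),
          RigidGSymmetric G (polyhedronOf a' b') ∧
          Recognizes (polyhedronOf a' b') A := by
  subst hP
  exact key G U (Fintype.card W) W inferInstance (le_refl _) V inferInstance a b hsym A hrec
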